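/- arXiv:1612.09391 — 2 statements merged into one kernel-verified Lean document; each statement's English description precedes it below -/
import Mathlib

section
/- Every short exact sequence of I₁-modules 0 → K[x] → N → K[x] → 0 splits, and consequently N ≅ K[x] ⊕ K[x]; that is, Ext¹_{I₁}(K[x], K[x]) = 0. -/
open Polynomial

set_option synthInstance.maxHeartbeats 1000000
set_option maxHeartbeats 1000000

/-- Multiplication by `x` on `K[x]`. -/
noncomputable def xOp (K : Type) [Field K] : Module.End K (Polynomial K) :=
  LinearMap.mulLeft K (X : Polynomial K)

/-- Formal derivative `d/dx` on `K[x]`. -/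
noncomputable def derOp (K : Type) [Field K] : Module.End K (Polynomial K) :=
  Polynomial.derivative

/-- Integration on `K[x]`: determined by `x^n ↦ x^(n+1)/(n+1)`. -/
noncomputable def intOp (K : Type) [Field K] [CharZero K] : Module.End K (Polynomial K) :=
  Polynomial.lsum fun n => (((n : K) + 1)⁻¹) • (Polynomial.monomial (n + 1) : K →ₗ[K] Polynomial K)

/-- The algebra `I₁ = K⟨x, d/dx, ∫⟩` of polynomial integro-differential operators. -/
noncomputable def I1 (K : Type) [Field K] [CharZero K] :
    Subalgebra K (Module.End K (Polynomial K)) :=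
  Algebra.adjoin K {xOp K, derOp K, intOp K}

noncomputable instance I1.instRing (K : Type) [Field K] [CharZero K] : Ring (I1 K) :=
  inferInstance
noncomputable instance I1.instAlgebra (K : Type) [Field K] [CharZero K] : Algebra K (I1 K) :=
  inferInstance
noncomputable instance I1.instAddCommGroup (K : Type) [Field K] [CharZero K] :
    AddCommGroup (I1 K) := inferInstance
noncomputable instance I1.instModuleK (K : Type) [Field K] [CharZero K] : Module K (I1 K) :=
  inferInstance

/-- `K[x]` is an `I₁`-module via the inclusion `I₁ ⊆ End_K(K[x])`. -/
noncomputable instance I1.instModulePoly (K : Type) [Field K] [CharZero K] :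
    Module (I1 K) (Polynomial K) :=
  Module.compHom (Polynomial K) (Subalgebra.val (I1 K)).toRingHom

instance I1.instTowerPoly (K : Type) [Field K] [CharZero K] :
    IsScalarTower K (I1 K) (Polynomial K) :=
  ⟨fun c a p => by
    show ((c • a : I1 K) : Module.End K (Polynomial K)) p
        = c • ((a : Module.End K (Polynomial K)) p)
    simp⟩

/-- The element `H = ∂x` of `I₁`. -/
noncomputable def Hop (K : Type) [Field K] [CharZero K] : I1 K :=
  ⟨derOp K * xOp K,
    mul_mem (Algebra.subset_adjoin (by simp)) (Algebra.subset_adjoin (by simp))⟩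

/-- The element `1 - ∫∂` of `I₁`. -/
noncomputable def eElt (K : Type) [Field K] [CharZero K] : I1 K :=
  1 - (⟨intOp K, Algebra.subset_adjoin (by simp)⟩ : I1 K) *
      (⟨derOp K, Algebra.subset_adjoin (by simp)⟩ : I1 K)

/-- The two-sided ideal `F` of `I₁` generated by `1 - ∫∂`, regarded as a left ideal. -/
noncomputable def Fideal (K : Type) [Field K] [CharZero K] : Ideal (I1 K) :=
  Ideal.span {y | ∃ a b : I1 K, y = a * eElt K * b}

/-- The left ideal `F + I₁(H-λ)^n` of `I₁`. -/
noncomputable def Msub (K : Type) [Field K] [CharZero K] (n : ℕ) (lam : K) : Ideal (I1 K) :=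
  Fideal K ⊔ Ideal.span {(Hop K - algebraMap K (I1 K) lam) ^ n}

/-- The left `I₁`-module `M(n,λ) = I₁/(F + I₁(H-λ)^n)`. -/
abbrev Mmod (K : Type) [Field K] [CharZero K] (n : ℕ) (lam : K) :=
  I1 K ⧸ Msub K n lam

section Weight

variable (K : Type) [Field K] [CharZero K]
variable (M : Type) [AddCommGroup M] [Module K M] [Module (I1 K) M] [IsScalarTower K (I1 K) M]

noncomputable instance : SMulCommClass (I1 K) K M := SMulCommClass.symm K (I1 K) M

/-- The generalized weight space `M^λ = {m ∈ M : (H-λ)^k m = 0 for some k}`. -/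
noncomputable def genWeightSpace (lam : K) : Submodule K M :=
  ⨆ k : ℕ,
    LinearMap.ker (DistribMulAction.toLinearMap K M ((Hop K - algebraMap K (I1 K) lam) ^ k))

/-- `M` is a generalized weight module if `M = ⊕_{λ∈K} M^λ`. -/
def IsGenWeightModule : Prop :=
  letI := Classical.decEq K
  DirectSum.IsInternal fun lam : K => genWeightSpace K M lam

/-- The support of `M`: the set of `λ ∈ K` with `M^λ ≠ 0`. -/
noncomputable def suppSet : Set K := {lam : K | genWeightSpace K M lam ≠ ⊥}

end Weight

section Mod

variable (K : Type) [Field K] [CharZero K]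
variable (M : Type) [AddCommGroup M] [Module (I1 K) M]

/-- `M` is indecomposable: it is not the direct sum of two nonzero submodules. -/
def IsIndecomposableMod : Prop :=
  ¬ ∃ N₁ N₂ : Submodule (I1 K) M, N₁ ≠ ⊥ ∧ N₂ ≠ ⊥ ∧ IsCompl N₁ N₂

/-- The submodule `FM` of `M`. -/
noncomputable def FMsub : Submodule (I1 K) M :=
  Submodule.span (I1 K) {m : M | ∃ f ∈ Fideal K, ∃ x : M, m = f • x}

/-- `M` has length `n`: there is a composition series `⊥ = M₀ ⋖ ⋯ ⋖ Mₙ = ⊤`. -/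
def HasLength (n : ℕ) : Prop :=
  ∃ s : CompositionSeries (Submodule (I1 K) M), s.head = ⊥ ∧ s.last = ⊤ ∧ s.length = n

end Mod

section Aux

variable (K : Type) [Field K] [CharZero K]

-- smul is application
lemma I1smul_def (a : I1 K) (p : Polynomial K) :
    a • p = (a : Module.End K (Polynomial K)) p := rfl

theorem intder (n : ℕ) (c : K) (hn : n ≠ 0) :
    intOp K (derivative (monomial n c)) = monomial n c := by
  obtain ⟨k, rfl⟩ := Nat.exists_eq_succ_of_ne_zero hn
  rw [intOp, derivative_monomial, lsum_apply, Polynomial.sum_monomial_index]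
  · simp only [LinearMap.smul_apply, Nat.succ_sub_one, Nat.cast_succ]
    have hc : ((k:K)+1)⁻¹ • (c * ((k:K)+1)) = c := by
      have h0 : ((k:K)+1) ≠ 0 := by exact_mod_cast Nat.succ_ne_zero k
      rw [smul_eq_mul, mul_comm c, ← mul_assoc, inv_mul_cancel₀ h0, one_mul]
    rw [← (monomial (k+1)).map_smul, hc]
  · simp

theorem e_apply (p : Polynomial K) :
    (eElt K : Module.End K (Polynomial K)) p = C (p.coeff 0) := by
  have key : ∀ q : Polynomial K, intOp K (derivative q) = q - C (q.coeff 0) := by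
    intro q
    induction q using Polynomial.induction_on' with
    | add p q hp hq =>
        rw [derivative_add, map_add, hp, hq, coeff_add, map_add]; ring
    | monomial n a =>
        rcases eq_or_ne n 0 with rfl | hn
        · simp [intOp]
        · rw [intder K n a hn, coeff_monomial, if_neg hn, map_zero, sub_zero]
  show ((1 : Module.End K (Polynomial K)) - intOp K * derOp K) p = _
  have : (intOp K * derOp K) p = intOp K (derivative p) := rfl
  rw [LinearMap.sub_apply, this, key p, Module.End.one_apply]
  ring

theorem mul_e_eq_zero (b : I1 K) (hb : (b : Module.End K (Polynomial K)) 1 = 0) :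
    b * eElt K = 0 := by
  apply Subtype.ext
  show (b : Module.End K (Polynomial K)) * (eElt K : Module.End K (Polynomial K)) = 0
  refine LinearMap.ext fun p => ?_
  rw [Module.End.mul_apply, e_apply, LinearMap.zero_apply]
  have : (C (p.coeff 0) : Polynomial K) = p.coeff 0 • (1 : Polynomial K) := by
    rw [smul_eq_C_mul, mul_one]
  rw [this, map_smul, hb, smul_zero]

noncomputable def xI : I1 K :=
  ⟨xOp K, Algebra.subset_adjoin (by simp)⟩

theorem aeval_xI_val (p : Polynomial K) :
    ((Polynomial.aeval (xI K) p : I1 K) : Module.End K (Polynomial K))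
      = Algebra.lmul K (Polynomial K) p := by
  have h1 : ((Polynomial.aeval (xI K) p : I1 K) : Module.End K (Polynomial K))
      = Polynomial.aeval (xOp K) p := by
    have := Polynomial.aeval_algHom_apply (Subalgebra.val (I1 K)) (xI K) p
    exact this.symm
  have h2 : Polynomial.aeval (xOp K) p = Algebra.lmul K (Polynomial K) p := by
    have : xOp K = Algebra.lmul K (Polynomial K) X := rfl
    rw [this, Polynomial.aeval_algHom_apply, Polynomial.aeval_X_left_apply]
  rw [h1, h2]

theorem aeval_xI_smul_one (p : Polynomial K) :
    (Polynomial.aeval (xI K) p : I1 K) • (1 : Polynomial K) = p := by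
  rw [I1smul_def, aeval_xI_val]
  simp [Algebra.lmul]

theorem e_smul_one : eElt K • (1 : Polynomial K) = 1 := by
  rw [I1smul_def, e_apply]; simp

end Aux

/-- Every short exact sequence of `I₁`-modules `0 → K[x] → N → K[x] → 0`
splits, and consequently `N ≅ K[x] ⊕ K[x]`; that is, `Ext¹(K[x], K[x]) = 0`. -/
theorem stmt_15 (K : Type) [Field K] [CharZero K]
    (N : Type) [AddCommGroup N] [Module (I1 K) N]
    (f : Polynomial K →ₗ[I1 K] N) (g : N →ₗ[I1 K] Polynomial K)
    (hf : Function.Injective f) (hg : Function.Surjective g)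
    (hfg : LinearMap.range f = LinearMap.ker g) :
    (∃ h : Polynomial K →ₗ[I1 K] N, g.comp h = LinearMap.id) ∧
    Nonempty (N ≃ₗ[I1 K] (Polynomial K × Polynomial K)) := by
  obtain ⟨n, hn⟩ := hg 1
  obtain ⟨n₀, hn₀⟩ : ∃ m : N, m = eElt K • n := ⟨_, rfl⟩
  have key : ∀ b : I1 K, (b : Module.End K (Polynomial K)) 1 = 0 → b • n₀ = 0 := by
    intro b hb
    rw [hn₀, ← mul_smul, mul_e_eq_zero K b hb, zero_smul]
  have hgn₀ : g n₀ = 1 := by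
    rw [hn₀, map_smul, hn, e_smul_one]
  have hsm : ∀ (a : I1 K) (p : Polynomial K),
      (Polynomial.aeval (xI K) (a • p) : I1 K) • n₀
        = a • ((Polynomial.aeval (xI K) p : I1 K) • n₀) := by
    intro a p
    have hb : ((Polynomial.aeval (xI K) (a • p) - a * Polynomial.aeval (xI K) p : I1 K) :
        Module.End K (Polynomial K)) 1 = 0 := by
      have h1 : ((Polynomial.aeval (xI K) (a • p) : I1 K) :
          Module.End K (Polynomial K)) 1 = a • p := by
        rw [← I1smul_def, aeval_xI_smul_one]
      have h2 : ((a * Polynomial.aeval (xI K) p : I1 K) :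
          Module.End K (Polynomial K)) 1 = a • p := by
        have hmul : ((a * Polynomial.aeval (xI K) p : I1 K) :
            Module.End K (Polynomial K)) 1
            = (a : Module.End K (Polynomial K))
              (((Polynomial.aeval (xI K) p : I1 K) :
                Module.End K (Polynomial K)) 1) := rfl
        rw [hmul, ← I1smul_def K (Polynomial.aeval (xI K) p) 1, aeval_xI_smul_one, ← I1smul_def]
      calc ((Polynomial.aeval (xI K) (a • p) - a * Polynomial.aeval (xI K) p : I1 K) :
            Module.End K (Polynomial K)) 1
          = ((Polynomial.aeval (xI K) (a • p) : I1 K) : Module.End K (Polynomial K)) 1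
            - ((a * Polynomial.aeval (xI K) p : I1 K) : Module.End K (Polynomial K)) 1 := rfl
        _ = a • p - a • p := by rw [h1, h2]
        _ = 0 := sub_self _
    have h0 := key _ hb
    rw [sub_smul, sub_eq_zero] at h0
    rw [h0, mul_smul]
  set h : Polynomial K →ₗ[I1 K] N :=
    { toFun := fun p => (Polynomial.aeval (xI K) p : I1 K) • n₀
      map_add' := fun p q => by rw [map_add, add_smul]
      map_smul' := fun a p => hsm a p } with hh
  have hghp : ∀ p : Polynomial K, g (h p) = p := by
    intro p
    show g ((Polynomial.aeval (xI K) p : I1 K) • n₀) = p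
    rw [map_smul, hgn₀, aeval_xI_smul_one]
  have hgh : g.comp h = LinearMap.id := LinearMap.ext hghp
  refine ⟨⟨h, hgh⟩, ?_⟩
  have hgf : ∀ p : Polynomial K, g (f p) = 0 := fun p =>
    LinearMap.mem_ker.mp (hfg ▸ LinearMap.mem_range_self f p)
  set ψ : (Polynomial K × Polynomial K) →ₗ[I1 K] N := f.coprod h with hψ
  have hbij : Function.Bijective ψ := by
    constructor
    · intro ⟨p, q⟩ ⟨p', q'⟩ hpq
      have heq : f p + h q = f p' + h q' := hpq
      have hq : q = q' := by
        have := congrArg g heq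
        simpa [map_add, hgf, hghp] using this
      have hp : p = p' := by
        apply hf
        subst hq
        exact add_right_cancel heq
      simp [hp, hq]
    · intro m
      have hker : m - h (g m) ∈ LinearMap.ker g := by
        rw [LinearMap.mem_ker, map_sub, hghp, sub_self]
      rw [← hfg] at hker
      obtain ⟨p, hp⟩ := hker
      refine ⟨(p, g m), ?_⟩
      show f p + h (g m) = m
      rw [hp, sub_add_cancel]
  exact ⟨(LinearEquiv.ofBijective ψ hbij).symm⟩
end

section
/- Let n, m ≥ 1 be integers and λ, μ ∈ K with λ − μ ∉ ℤ. Then every short exact sequence of I₁-modules 0 → M(m,μ) → L → M(n,λ) → 0 splits; that is, Ext¹_{I₁}(M(n,λ), M(m,μ)) = 0. -/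
open Polynomial

set_option synthInstance.maxHeartbeats 1000000
set_option maxHeartbeats 1000000

set_option linter.unusedSectionVars false
section Aux
variable (K : Type) [Field K] [CharZero K]


lemma xOp_monomial (n : ℕ) (a : K) : xOp K (monomial n a) = monomial (n+1) a := by
  simp [xOp, LinearMap.mulLeft_apply, X_mul_monomial]

lemma derOp_monomial (n : ℕ) (a : K) : derOp K (monomial n a) = monomial (n-1) (a * n) := by
  simp [derOp, derivative_monomial]

lemma intOp_monomial (n : ℕ) (a : K) :
    intOp K (monomial n a) = ((n:K)+1)⁻¹ • monomial (n+1) a := by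
  simp [intOp, lsum_apply, sum_monomial_index]

lemma derOp_mul_intOp : derOp K * intOp K = 1 := by
  apply Polynomial.lhom_ext'
  intro n
  apply LinearMap.ext
  intro a
  simp only [LinearMap.coe_comp, Function.comp_apply, Module.End.mul_apply, intOp_monomial,
    map_smul, derOp_monomial, Module.End.one_apply]
  rw [Nat.add_sub_cancel]
  rw [smul_monomial]
  congr 1
  push_cast
  field_simp
  rw [smul_eq_mul, one_div, ← mul_assoc, inv_mul_cancel₀ (Nat.cast_add_one_ne_zero n), one_mul]

lemma Hop_monomial (n : ℕ) (a : K) :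
    (derOp K * xOp K) (monomial n a) = monomial n (a * (n+1)) := by
  rw [Module.End.mul_apply, xOp_monomial, derOp_monomial, Nat.add_sub_cancel]
  push_cast
  ring_nf

lemma Hx_op : (derOp K * xOp K) * xOp K = xOp K * ((derOp K * xOp K) + 1) := by
  apply Polynomial.lhom_ext'; intro n; apply LinearMap.ext; intro a
  simp only [LinearMap.coe_comp, Function.comp_apply, Module.End.mul_apply, LinearMap.add_apply,
    Module.End.one_apply, Hop_monomial, xOp_monomial, map_add]
  rw [derOp_monomial, derOp_monomial, Nat.add_sub_cancel, Nat.add_sub_cancel, xOp_monomial,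
    ← map_add]
  congr 1
  push_cast
  ring

lemma dx_monomial (n : ℕ) (a : K) :
    derOp K (xOp K (monomial n a)) = monomial n (a * (n+1)) := by
  rw [← Module.End.mul_apply, Hop_monomial]

lemma Hd_op : (derOp K * xOp K) * derOp K = derOp K * ((derOp K * xOp K) - 1) := by
  apply Polynomial.lhom_ext'; intro n; apply LinearMap.ext; intro a
  simp only [LinearMap.coe_comp, Function.comp_apply, Module.End.mul_apply, LinearMap.sub_apply,
    Module.End.one_apply, map_sub, derOp_monomial, xOp_monomial, Nat.add_sub_cancel,
    Nat.sub_add_cancel]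
  rw [← monomial_sub]
  cases n with
  | zero => simp
  | succ k =>
    rw [Nat.add_sub_cancel]
    congr 1
    push_cast
    ring

lemma Hj_op : (derOp K * xOp K) * intOp K = intOp K * ((derOp K * xOp K) + 1) := by
  apply Polynomial.lhom_ext'; intro n; apply LinearMap.ext; intro a
  simp only [LinearMap.coe_comp, Function.comp_apply, Module.End.mul_apply, LinearMap.add_apply,
    Module.End.one_apply, map_add]
  rw [intOp_monomial, map_smul, map_smul, dx_monomial, dx_monomial, intOp_monomial,
    smul_monomial, smul_monomial, smul_monomial, ← map_add]
  congr 1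
  have h : ((n:K)+1) ≠ 0 := Nat.cast_add_one_ne_zero n
  field_simp
  push_cast
  ring

noncomputable def xel : I1 K := ⟨xOp K, Algebra.subset_adjoin (by simp)⟩
noncomputable def del : I1 K := ⟨derOp K, Algebra.subset_adjoin (by simp)⟩
noncomputable def jel : I1 K := ⟨intOp K, Algebra.subset_adjoin (by simp)⟩

lemma Hop_eq : Hop K = del K * xel K := rfl

lemma eElt_eq : eElt K = 1 - jel K * del K := rfl

lemma del_mul_jel : del K * jel K = 1 :=
  Subtype.ext (derOp_mul_intOp K)

lemma Hx : Hop K * xel K = xel K * (Hop K + 1) :=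
  Subtype.ext (Hx_op K)

lemma Hd : Hop K * del K = del K * (Hop K - 1) :=
  Subtype.ext (Hd_op K)

lemma Hj : Hop K * jel K = jel K * (Hop K + 1) :=
  Subtype.ext (Hj_op K)

lemma eElt_idem : eElt K * eElt K = eElt K := by
  rw [eElt_eq, sub_mul, one_mul, mul_sub, mul_one, mul_assoc, ← mul_assoc (del K),
    del_mul_jel, one_mul]
  abel

lemma adjoin_top : Algebra.adjoin K {xel K, del K, jel K} = ⊤ := by
  rw [eq_top_iff]
  rintro ⟨a, ha⟩ -
  have himg : (Subalgebra.val (I1 K)) '' {xel K, del K, jel K} = {xOp K, derOp K, intOp K} := by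
    simp only [Set.image_insert_eq, Set.image_singleton]
    rfl
  have hmap : Subalgebra.map (Subalgebra.val (I1 K)) (Algebra.adjoin K {xel K, del K, jel K})
      = I1 K := by
    rw [AlgHom.map_adjoin, himg]; rfl
  have : a ∈ Subalgebra.map (Subalgebra.val (I1 K)) (Algebra.adjoin K {xel K, del K, jel K}) := by
    rw [hmap]; exact ha
  obtain ⟨y, hy, hyv⟩ := this
  have : y = ⟨a, ha⟩ := Subtype.ext hyv
  exact this ▸ hy

lemma aeval_comm {R : Type*} [Ring R] [Algebra K R] (h h' w : R)
    (hw : h * w = w * h') (q : Polynomial K) :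
    (aeval h q) * w = w * (aeval h' q) := by
  induction q using Polynomial.induction_on with
  | C a => simp only [aeval_C]; exact (Algebra.commutes a w).symm ▸ (Algebra.commutes a w)
  | add p r hp hr => rw [map_add, map_add, add_mul, mul_add, hp, hr]
  | monomial k a ih =>
    have hsplit : (C a * X ^ (k + 1)) = (C a * X ^ k) * X := by ring
    rw [hsplit]
    calc (aeval h) (C a * X ^ k * X) * w
        = (aeval h) (C a * X ^ k) * (h * w) := by rw [map_mul, aeval_X, mul_assoc]
      _ = (aeval h) (C a * X ^ k) * (w * h') := by rw [hw]
      _ = (w * (aeval h') (C a * X ^ k)) * h' := by rw [← mul_assoc, ih]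
      _ = w * (aeval h') (C a * X ^ k * X) := by
            conv_rhs => rw [map_mul, aeval_X]
            rw [mul_assoc]

/-- every word in the generators shifts `H` by an integer -/
lemma word_shift (w : I1 K) (hw : w ∈ Submonoid.closure {xel K, del K, jel K}) :
    ∃ d : ℤ, Hop K * w = w * (Hop K + algebraMap K (I1 K) (d : K)) := by
  induction hw using Submonoid.closure_induction with
  | one => exact ⟨0, by simp⟩
  | mem x hx =>
    rcases hx with h | h | h
    · exact ⟨1, by rw [h]; simpa using Hx K⟩
    · exact ⟨-1, by rw [h]; simpa [sub_eq_add_neg] using Hd K⟩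
    · exact ⟨1, by rw [h]; simpa using Hj K⟩
  | mul x y hx hy ihx ihy =>
    obtain ⟨d₁, h₁⟩ := ihx
    obtain ⟨d₂, h₂⟩ := ihy
    refine ⟨d₁ + d₂, ?_⟩
    have hcen : ∀ (c : K) (z : I1 K), algebraMap K (I1 K) c * z = z * algebraMap K (I1 K) c :=
      fun c z => (Algebra.commutes c z).symm ▸ (Algebra.commutes c z)
    rw [← mul_assoc, h₁, mul_assoc, add_mul, h₂, hcen ((d₁ : K)) y, ← mul_add, Int.cast_add,
      map_add, ← mul_assoc]
    congr 1
    abel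

lemma Msub_smul_K (m : ℕ) (mu : K) (c : K) {x : I1 K} (hx : x ∈ Msub K m mu) :
    c • x ∈ Msub K m mu := by
  rw [← algebraMap_smul (I1 K) c x]
  exact Submodule.smul_mem _ _ hx

lemma pow_mem_Msub (m : ℕ) (mu : K) (c : I1 K) :
    c * (Hop K - algebraMap K (I1 K) mu) ^ m ∈ Msub K m mu :=
  Submodule.mem_sup_right (Submodule.mem_span_singleton.mpr ⟨c, by rw [smul_eq_mul]⟩)

lemma solve_I1 (m : ℕ) (lam mu : K) (hZ : ¬ ∃ k : ℤ, lam - mu = (k : K)) (n : ℕ) (a : I1 K) :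
    ∃ b : I1 K, (Hop K - algebraMap K (I1 K) lam) ^ n * b - a ∈ Msub K m mu := by
  set q : Polynomial K := (X - C lam) ^ n with hq
  have haq : aeval (Hop K) q = (Hop K - algebraMap K (I1 K) lam) ^ n := by
    rw [hq, map_pow, map_sub, aeval_X, aeval_C]
  rw [← haq]
  have hmem : a ∈ Submodule.span K
      ((Submonoid.closure {xel K, del K, jel K} : Submonoid (I1 K)) : Set (I1 K)) := by
    have h1 : a ∈ Subalgebra.toSubmodule (Algebra.adjoin K {xel K, del K, jel K}) := by
      rw [adjoin_top K, Algebra.top_toSubmodule]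
      exact Submodule.mem_top
    rwa [Algebra.adjoin_eq_span] at h1
  induction hmem using Submodule.span_induction with
  | zero => exact ⟨0, by simpa using Submodule.zero_mem _⟩
  | add x y hx hy ihx ihy =>
    obtain ⟨b₁, h₁⟩ := ihx
    obtain ⟨b₂, h₂⟩ := ihy
    refine ⟨b₁ + b₂, ?_⟩
    have := Submodule.add_mem _ h₁ h₂
    have heq : aeval (Hop K) q * b₁ - x + (aeval (Hop K) q * b₂ - y)
        = aeval (Hop K) q * (b₁ + b₂) - (x + y) := by
      rw [mul_add]; abel
    rwa [heq] at this
  | smul c x hx ihx =>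
    obtain ⟨b, hb⟩ := ihx
    refine ⟨c • b, ?_⟩
    have heq : aeval (Hop K) q * (c • b) - c • x = c • (aeval (Hop K) q * b - x) := by
      rw [smul_sub, mul_smul_comm]
    rw [heq]
    exact Msub_smul_K K m mu c hb
  | mem w hw =>
    obtain ⟨d, hd⟩ := word_shift K w hw
    set q' : Polynomial K := q.comp (X + C (d : K)) with hq'
    have hq'mu : q'.eval mu ≠ 0 := by
      rw [hq', eval_comp]
      simp only [eval_add, eval_X, eval_C, hq, eval_pow, eval_sub]
      apply pow_ne_zero
      intro hcon
      exact hZ ⟨d, by linear_combination -hcon⟩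
    have hndvd : ¬ ((X - C mu) ∣ q') := by
      intro hdvd
      exact hq'mu (dvd_iff_isRoot.mp hdvd)
    have hcop : IsCoprime ((X - C mu) ^ m) q' :=
      ((irreducible_X_sub_C mu).coprime_iff_not_dvd.mpr hndvd).pow_left
    obtain ⟨u, v, huv⟩ := hcop
    refine ⟨w * aeval (Hop K) v, ?_⟩
    have hshift : aeval (Hop K) q * w = w * aeval (Hop K) q' := by
      rw [hq', aeval_comp]
      have h2 : aeval (Hop K) ((X : Polynomial K) + C (d : K))
          = Hop K + algebraMap K (I1 K) ((d : ℤ) : K) := by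
        rw [map_add, aeval_X, aeval_C]
      rw [h2]
      exact aeval_comm K _ _ w hd q
    have hv : v * q' = 1 - u * (X - C mu) ^ m := by linear_combination huv
    have hXC : aeval (Hop K) ((X - C mu) ^ m) = (Hop K - algebraMap K (I1 K) mu) ^ m := by
      rw [map_pow, map_sub, aeval_X, aeval_C]
    have key : aeval (Hop K) q * (w * aeval (Hop K) v) - w
        = -(w * aeval (Hop K) u * (Hop K - algebraMap K (I1 K) mu) ^ m) := by
      rw [← mul_assoc, hshift, mul_assoc, ← map_mul, mul_comm q' v, hv,
        map_sub, map_one, map_mul, hXC, mul_sub, mul_one, ← mul_assoc]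
      abel
    rw [key]
    exact Submodule.neg_mem _ (pow_mem_Msub K m mu _)

lemma mk_mul_smul (n : ℕ) (lam : K) (c a : I1 K) :
    c • (Submodule.Quotient.mk a : Mmod K n lam) = Submodule.Quotient.mk (c * a) := by
  rw [← smul_eq_mul, Submodule.Quotient.mk_smul]

lemma e_smul_Mmod (n : ℕ) (lam : K) (z : Mmod K n lam) : eElt K • z = 0 := by
  obtain ⟨a, rfl⟩ := Submodule.Quotient.mk_surjective _ z
  rw [mk_mul_smul, Submodule.Quotient.mk_eq_zero]
  refine Submodule.mem_sup_left (Ideal.subset_span ?_)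
  exact ⟨1, a, by rw [one_mul]⟩

end Aux

set_option maxHeartbeats 20000000

/-- Let `n, m ≥ 1` and `λ, μ ∈ K` with `λ - μ ∉ ℤ`. Then every short exact
sequence of `I₁`-modules `0 → M(m,μ) → L → M(n,λ) → 0` splits; that is,
`Ext¹(M(n,λ), M(m,μ)) = 0`. -/
theorem stmt_17 (K : Type) [Field K] [CharZero K] (n m : ℕ) (hn : 1 ≤ n) (hm : 1 ≤ m)
    (lam mu : K) (hZ : ¬ ∃ k : ℤ, lam - mu = (k : K))
    (L : Type) [AddCommGroup L] [Module (I1 K) L]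
    (f : Mmod K m mu →ₗ[I1 K] L) (g : L →ₗ[I1 K] Mmod K n lam)
    (hf : Function.Injective f) (hg : Function.Surjective g)
    (hfg : LinearMap.range f = LinearMap.ker g) :
    ∃ h : Mmod K n lam →ₗ[I1 K] L, g.comp h = LinearMap.id := by
  classical
  set P : I1 K := (Hop K - algebraMap K (I1 K) lam) ^ n with hP
  have hF : ∀ s ∈ Fideal K, ∀ y : L, s • y = 0 := by
    intro s hs
    induction hs using Submodule.span_induction with
    | mem x hxgen =>
      obtain ⟨a, b, rfl⟩ := hxgen
      intro y
      have hy1 : g ((eElt K) • (b • y)) = 0 := by rw [map_smul, e_smul_Mmod]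
      have hy2 : (eElt K) • (b • y) ∈ LinearMap.range f := by
        rw [hfg]; exact LinearMap.mem_ker.mpr hy1
      obtain ⟨z, hz⟩ := hy2
      have h2 : (eElt K) • ((eElt K) • (b • y)) = 0 := by
        rw [← hz, ← map_smul, e_smul_Mmod, map_zero]
      have hfac : a * eElt K * b = a * (eElt K * (eElt K * b)) := by
        rw [mul_assoc, ← mul_assoc (eElt K), eElt_idem]
      rw [hfac, mul_smul, mul_smul, mul_smul, h2, smul_zero]
    | zero => intro y; rw [zero_smul]
    | add x y hx hy ihx ihy => intro z; rw [add_smul, ihx z, ihy z, add_zero]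
    | smul c x hx ihx => intro z; rw [smul_eq_mul, mul_smul, ihx z, smul_zero]
  obtain ⟨ℓ, hℓ⟩ := hg (Submodule.Quotient.mk 1)
  have hPmem : P ∈ Msub K n lam :=
    Submodule.mem_sup_right (Submodule.mem_span_singleton_self _)
  have hgP : g (P • ℓ) = 0 := by
    rw [map_smul, hℓ, mk_mul_smul, mul_one, Submodule.Quotient.mk_eq_zero]
    exact hPmem
  obtain ⟨u₀, hu₀⟩ : P • ℓ ∈ LinearMap.range f := by
    rw [hfg]; exact LinearMap.mem_ker.mpr hgP
  obtain ⟨w, hw⟩ : ∃ w : Mmod K m mu, P • w = u₀ := by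
    obtain ⟨c, rfl⟩ := Submodule.Quotient.mk_surjective _ u₀
    obtain ⟨b, hb⟩ := solve_I1 K m lam mu hZ n c
    refine ⟨Submodule.Quotient.mk b, ?_⟩
    rw [mk_mul_smul]
    exact (Submodule.Quotient.eq _).mpr hb
  set ℓ' : L := ℓ - f w with hℓ'
  have hgℓ' : g ℓ' = Submodule.Quotient.mk 1 := by
    have hfw : f w ∈ LinearMap.ker g := by
      rw [← hfg]; exact LinearMap.mem_range_self f w
    rw [hℓ', map_sub, hℓ, LinearMap.mem_ker.mp hfw, sub_zero]
  have hPℓ' : P • ℓ' = 0 := by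
    rw [hℓ', smul_sub, ← map_smul, hw, hu₀, sub_self]
  let φ : I1 K →ₗ[I1 K] L :=
    { toFun := fun c => c • ℓ'
      map_add' := fun c₁ c₂ => add_smul c₁ c₂ ℓ'
      map_smul' := fun c₁ c₂ => by simp only [smul_eq_mul, mul_smul, RingHom.id_apply] }
  have hker : Msub K n lam ≤ LinearMap.ker φ := by
    rw [Msub]
    apply sup_le
    · intro s hs
      exact LinearMap.mem_ker.mpr (hF s hs ℓ')
    · rw [Ideal.span_le]
      intro s hs
      rw [Set.mem_singleton_iff] at hs
      subst hs
      exact LinearMap.mem_ker.mpr hPℓ'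
  refine ⟨Submodule.liftQ (Msub K n lam) φ hker, ?_⟩
  apply LinearMap.ext
  intro z
  obtain ⟨c, rfl⟩ := Submodule.Quotient.mk_surjective _ z
  rw [LinearMap.comp_apply, Submodule.liftQ_apply, LinearMap.id_apply]
  show g (c • ℓ') = _
  rw [map_smul, hgℓ', mk_mul_smul, mul_one]
end
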